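/- Let ζ satisfy the continuity condition (Δζ)(r+d)·(Δ^d ζ)(r) = (Δ^d ζ)(r+1)·(Δζ)(r) for all r ≥ 0, d ≥ 1 (with all forward differences nonzero). Then the right-continuity condition (Δ^{d-1}ζ)(r+2)/(Δ^{d-1}ζ)(r+1) · (Δζ)(r+1)/(Δζ)(r) = (Δ^d ζ)(r+1)/(Δ^d ζ)(r) holds for all r ≥ 0 and d > 1. -/

import Mathlib

/-- d-th order forward difference of a sequence: (Δ^d ζ)(r) = ∑_{j=0}^d (-1)^{d-j} C(d,j) ζ(r+j). -/
noncomputable def fdiff (ζ : ℕ → ℝ) (d r : ℕ) : ℝ :=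
  ∑ j ∈ Finset.range (d + 1), (-1 : ℝ) ^ (d - j) * (d.choose j : ℝ) * ζ (r + j)

theorem stmt_12 (ζ : ℕ → ℝ)
    (hne : ∀ r d, 1 ≤ d → fdiff ζ d r ≠ 0)
    (hcont : ∀ r d, 1 ≤ d → fdiff ζ 1 (r + d) * fdiff ζ d r = fdiff ζ d (r + 1) * fdiff ζ 1 r) :
    ∀ r d, 1 < d →
      fdiff ζ (d - 1) (r + 2) / fdiff ζ (d - 1) (r + 1) * (fdiff ζ 1 (r + 1) / fdiff ζ 1 r) =
        fdiff ζ d (r + 1) / fdiff ζ d r := by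
  intro r d hd
  obtain ⟨e, rfl⟩ : ∃ e, d = e + 2 := ⟨d - 2, by omega⟩
  have h1 := hcont (r + 1) (e + 1) (by omega)
  have h2 := hcont r (e + 2) (by omega)
  rw [show r + 1 + (e + 1) = r + (e + 2) from by ring, show r + 1 + 1 = r + 2 from rfl] at h1
  have n1 := hne r 1 le_rfl
  have n2 := hne (r + 1) 1 le_rfl
  have n3 := hne r (e + 2) (by omega)
  have n4 := hne (r + 1) (e + 1) (by omega)
  have n5 := hne (r + 2) (e + 1) (by omega)
  simp only [show e + 2 - 1 = e + 1 from rfl]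
  field_simp
  linear_combination fdiff ζ (e + 1) (r + 1) * h2 - fdiff ζ (e + 2) r * h1
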